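/- Let p be an odd prime, u ∈ ℤ with p ∤ u, and M = diag(u,1) over ℤ/pℤ. For λ ∈ (ℤ/pℤ)^{2×2}, define G₂(λ) = Σ_{x symmetric over ℤ/pℤ, rank x = 2} e(tr(M ᵗλ x λ)/p). Then: (i) G₂(0) = p²(p−1); (ii) if rank λ = 2, G₂(λ) = −((−u)/p)·p; (iii) if rank λ = 1 with λ = (λ', t λ') and u + t² ≡ 0 mod p, G₂(λ) = p²(p−1); (iv) if rank λ = 1 with λ = (λ', tλ') and u+t² ≢ 0 mod p, or λ = (0, λ') with λ' ≠ 0, G₂(λ) = 0. -/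

import Mathlib

open Matrix
open scoped Classical

/-- The rank-two Gauss sum
`G₂(λ) = Σ_{x symmetric, rank x = 2} e(tr(diag(u,1) ᵗλ x λ)/p)` over `ℤ/pℤ`. -/
noncomputable def rankTwoGaussSum (p : ℕ) [NeZero p] (u : ℤ)
    (lam : Matrix (Fin 2) (Fin 2) (ZMod p)) : ℂ :=
  ∑ x : Fin 2 → Fin 2 → ZMod p,
    if (Matrix.of x).IsSymm ∧ (Matrix.of x).rank = 2 then
      Complex.exp (2 * Real.pi * Complex.I *
        ((((Matrix.diagonal ![(u : ZMod p), 1] * lamᵀ * Matrix.of x * lam).trace).val : ℕ) : ℂ)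
          / (p : ℂ))
    else 0

namespace Statement9Aux

open Finset

variable {p : ℕ} [Fact p.Prime]

lemma zmodTwoNeZero (hp2 : p ≠ 2) : (2 : ZMod p) ≠ 0 := by
  have : ((2 : ℕ) : ZMod p) ≠ 0 := by
    rw [Ne, ZMod.natCast_eq_zero_iff]
    intro h
    exact hp2 ((Nat.prime_dvd_prime_iff_eq Fact.out Nat.prime_two).mp h)
  simpa using this

lemma rank_two_iff (A : Matrix (Fin 2) (Fin 2) (ZMod p)) :
    A.rank = 2 ↔ A.det ≠ 0 := by
  constructor
  · intro h hdet
    have h1 : LinearMap.range A.mulVecLin = ⊤ := by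
      apply Submodule.eq_top_of_finrank_eq
      rw [Matrix.rank] at h
      rw [h]
      simp
    have hsurj : Function.Surjective A.mulVec := fun v => by
      have := LinearMap.range_eq_top.mp h1 v
      simpa using this
    have hA : IsUnit A := Matrix.mulVec_surjective_iff_isUnit.mp hsurj
    exact ((Matrix.isUnit_iff_isUnit_det A).mp hA).ne_zero hdet
  · intro h
    have : IsUnit A := (Matrix.isUnit_iff_isUnit_det A).mpr (isUnit_iff_ne_zero.mpr h)
    simpa using Matrix.rank_of_isUnit A this

lemma card_roots_quad (hp2 : p ≠ 2) {γ : ZMod p} (hγ : γ ≠ 0) (β α : ZMod p) :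
    ((univ.filter fun s : ZMod p => γ * s ^ 2 + β * s + α = 0).card : ℤ)
      = quadraticChar (ZMod p) (β ^ 2 - 4 * α * γ) + 1 := by
  classical
  have h2 : (2 : ZMod p) ≠ 0 := zmodTwoNeZero hp2
  have h2γ : 2 * γ ≠ 0 := mul_ne_zero h2 hγ
  have key : ∀ s : ZMod p, (γ * s ^ 2 + β * s + α = 0) ↔ (2 * γ * s + β) ^ 2 = β ^ 2 - 4 * α * γ := by
    intro s
    constructor
    · intro h
      have : (2 * γ * s + β) ^ 2 - (β ^ 2 - 4 * α * γ) = 4 * γ * (γ * s ^ 2 + β * s + α) := by ring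
      rw [h, mul_zero] at this
      linear_combination this
    · intro h
      have h4γ : (4 : ZMod p) * γ ≠ 0 := by
        have : (4 : ZMod p) = 2 * 2 := by norm_num
        exact mul_ne_zero (this ▸ mul_ne_zero h2 h2) hγ
      have : 4 * γ * (γ * s ^ 2 + β * s + α) = (2 * γ * s + β) ^ 2 - (β ^ 2 - 4 * α * γ) := by ring
      rw [h, sub_self] at this
      exact (mul_eq_zero.mp this).resolve_left h4γ
  have hcard : (univ.filter fun s : ZMod p => γ * s ^ 2 + β * s + α = 0).card
      = ({x : ZMod p | x ^ 2 = β ^ 2 - 4 * α * γ} : Set (ZMod p)).toFinset.card := by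
    apply Finset.card_bij (fun s _ => 2 * γ * s + β)
    · intro s hs
      rw [Set.mem_toFinset]
      exact (key s).mp (by simpa using hs)
    · intro s hs s' hs' h
      exact mul_left_cancel₀ h2γ (by linear_combination h)
    · intro y hy
      refine ⟨(y - β) * (2 * γ)⁻¹, ?_, ?_⟩
      · simp only [mem_filter, mem_univ, true_and]
        rw [key]
        have : 2 * γ * ((y - β) * (2 * γ)⁻¹) + β = y := by
          field_simp
          ring
        rw [this]
        simpa using hy
      · field_simp
        ring
  rw [hcard]
  have := quadraticChar_card_sqrts (by rwa [ZMod.ringChar_zmod_n]) (β ^ 2 - 4 * α * γ)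
  rw [this]

lemma sum_char' (t : ZMod p) :
    ∑ a : ZMod p, ZMod.stdAddChar (t * a) = if t = 0 then (p : ℂ) else 0 := by
  have h := AddChar.sum_mulShift t (ZMod.isPrimitive_stdAddChar p)
  rw [apply_ite (Nat.cast : ℕ → ℂ), ZMod.card] at h
  simpa [mul_comm] using h

lemma full_sum (α β γ : ZMod p) :
    (∑ a : ZMod p, ∑ b : ZMod p, ∑ c : ZMod p, ZMod.stdAddChar (α * a + β * b + γ * c))
    = (if α = 0 then (p:ℂ) else 0) * ((if β = 0 then (p:ℂ) else 0) * (if γ = 0 then (p:ℂ) else 0)) := by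
  simp_rw [AddChar.map_add_eq_mul, mul_assoc, ← Finset.mul_sum, sum_char', ← Finset.sum_mul, sum_char']

lemma singular_sum (α β γ : ZMod p) :
    (∑ a : ZMod p, ∑ b : ZMod p, ∑ c : ZMod p,
      if a * c = b * b then ZMod.stdAddChar (α * a + β * b + γ * c) else 0)
    = (if γ = 0 then (p : ℂ) else 0)
      + (((univ.filter fun s : ZMod p => γ * s ^ 2 + β * s + α = 0).card : ℂ) * p - p) := by
  classical
  set ψ := (ZMod.stdAddChar : AddChar (ZMod p) ℂ) with hψ
  rw [← Finset.add_sum_erase _ _ (mem_univ (0 : ZMod p))]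
  congr 1
  · -- a = 0 term
    have hb : ∀ b : ZMod p,
        (∑ c : ZMod p, if (0 : ZMod p) * c = b * b then ψ (α * 0 + β * b + γ * c) else 0)
        = if b = 0 then ∑ c : ZMod p, ψ (γ * c) else 0 := by
      intro b
      by_cases hb : b = 0
      · subst hb
        simp [zero_mul, mul_zero, zero_add]
      · rw [if_neg hb]
        refine Finset.sum_eq_zero fun c _ => if_neg ?_
        rw [zero_mul]
        exact fun h => (mul_ne_zero hb hb) h.symm
    rw [Finset.sum_congr rfl fun b _ => hb b]
    rw [Finset.sum_ite_eq' univ (0 : ZMod p)]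
    simp [sum_char' γ]
    exact sum_char' γ
  · -- a ≠ 0 part
    have hterm : ∀ a ∈ univ.erase (0 : ZMod p),
        (∑ b : ZMod p, ∑ c : ZMod p,
          if a * c = b * b then ψ (α * a + β * b + γ * c) else 0)
        = ∑ s : ZMod p, ψ (a * (γ * s ^ 2 + β * s + α)) := by
      intro a ha
      have ha' : a ≠ 0 := (Finset.mem_erase.mp ha).1
      have hc : ∀ b : ZMod p,
          (∑ c : ZMod p, if a * c = b * b then ψ (α * a + β * b + γ * c) else 0)
          = ψ (α * a + β * b + γ * (a⁻¹ * (b * b))) := by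
        intro b
        have : ∀ c : ZMod p, (a * c = b * b) ↔ (c = a⁻¹ * (b * b)) := by
          intro c
          constructor
          · intro h; rw [← h]; field_simp
          · intro h; rw [h]; field_simp
        simp_rw [this]
        rw [Finset.sum_ite_eq' univ (a⁻¹ * (b * b))]
        simp
      rw [Finset.sum_congr rfl fun b _ => hc b]
      rw [← Equiv.sum_comp (Equiv.mulLeft₀ a ha') (fun b => ψ (α * a + β * b + γ * (a⁻¹ * (b * b))))]
      refine Finset.sum_congr rfl fun s _ => ?_
      congr 1
      have : (Equiv.mulLeft₀ a ha') s = a * s := rfl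
      rw [this]
      field_simp
      ring
    rw [Finset.sum_congr rfl hterm, Finset.sum_comm]
    have hin : ∀ s : ZMod p,
        (∑ a ∈ univ.erase (0 : ZMod p), ψ (a * (γ * s ^ 2 + β * s + α)))
        = (if γ * s ^ 2 + β * s + α = 0 then (p : ℂ) else 0) - 1 := by
      intro s
      rw [Finset.sum_erase_eq_sub (mem_univ (0 : ZMod p))]
      congr 1
      · rw [← sum_char' (γ * s ^ 2 + β * s + α)]
        exact Finset.sum_congr rfl fun a _ => by rw [mul_comm]
      · simp
    rw [Finset.sum_congr rfl fun s _ => hin s, Finset.sum_sub_distrib]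
    congr 1
    · rw [Finset.sum_ite, Finset.sum_const, Finset.sum_const_zero, add_zero, nsmul_eq_mul]
    · simp [Finset.card_univ, ZMod.card]

lemma master (hp2 : p ≠ 2) (α β γ : ZMod p) :
    (∑ a : ZMod p, ∑ b : ZMod p, ∑ c : ZMod p,
      if a * c - b * b ≠ 0 then ZMod.stdAddChar (α * a + β * b + γ * c) else 0)
    = if α = 0 ∧ β = 0 ∧ γ = 0 then (p : ℂ) ^ 2 * ((p : ℂ) - 1)
      else -(((quadraticChar (ZMod p) (β ^ 2 - 4 * α * γ) : ℤ) : ℂ) * (p : ℂ)) := by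
  classical
  have hsplit : ∀ a b c : ZMod p,
      (if a * c - b * b ≠ 0 then ZMod.stdAddChar (α * a + β * b + γ * c) else 0)
      = ZMod.stdAddChar (α * a + β * b + γ * c)
        - (if a * c = b * b then ZMod.stdAddChar (α * a + β * b + γ * c) else 0) := by
    intro a b c
    by_cases h : a * c = b * b
    · simp [h, sub_ne_zero]
    · simp [sub_ne_zero, h]
  simp_rw [hsplit, Finset.sum_sub_distrib]
  rw [full_sum, singular_sum]
  by_cases h0 : α = 0 ∧ β = 0 ∧ γ = 0
  · obtain ⟨h1, h2, h3⟩ := h0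
    subst h1; subst h2; subst h3
    have hfil : (univ.filter fun s : ZMod p => (0:ZMod p) * s ^ 2 + 0 * s + 0 = 0) = univ := by
      simp
    rw [hfil]
    simp only [Finset.card_univ, ZMod.card, if_pos trivial, and_self, if_true, eq_self_iff_true]
    ring
  · rw [if_neg h0]
    by_cases hγ : γ = 0
    · by_cases hβ : β = 0
      · have hα : α ≠ 0 := by tauto
        subst hγ; subst hβ
        have hfil : (univ.filter fun s : ZMod p => (0:ZMod p) * s ^ 2 + 0 * s + α = 0) = ∅ := by
          simp [hα]
        rw [hfil]
        simp [hα, quadraticChar_zero]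
      · subst hγ
        have hfil : (univ.filter fun s : ZMod p => (0:ZMod p) * s ^ 2 + β * s + α = 0)
            = {-α * β⁻¹} := by
          ext s
          simp only [mem_filter, mem_univ, true_and, mem_singleton, zero_mul, zero_add]
          constructor
          · intro h
            field_simp
            linear_combination h
          · intro h
            rw [h]
            field_simp
            ring
        rw [hfil]
        have hχ : quadraticChar (ZMod p) (β ^ 2 - 4 * α * 0) = 1 := by
          rw [mul_zero, sub_zero]
          exact quadraticChar_sq_one' hβ
        rw [hχ]
        simp [hβ]
    · have hcard := card_roots_quad hp2 hγ β α
      have hcardC : ((univ.filter fun s : ZMod p => γ * s ^ 2 + β * s + α = 0).card : ℂ)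
          = ((quadraticChar (ZMod p) (β ^ 2 - 4 * α * γ) : ℤ) : ℂ) + 1 := by
        exact_mod_cast congrArg (Int.cast : ℤ → ℂ) hcard
      rw [hcardC]
      simp only [if_neg hγ]
      ring

lemma gauss_eq (u : ℤ) (lam : Matrix (Fin 2) (Fin 2) (ZMod p)) :
    rankTwoGaussSum p u lam
    = ∑ a : ZMod p, ∑ b : ZMod p, ∑ c : ZMod p,
        if a * c - b * b ≠ 0 then
          ZMod.stdAddChar ((((u : ZMod p) * lam 0 0 ^ 2 + lam 0 1 ^ 2)) * a
            + (2 * ((u : ZMod p) * lam 0 0 * lam 1 0 + lam 0 1 * lam 1 1)) * b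
            + (((u : ZMod p) * lam 1 0 ^ 2 + lam 1 1 ^ 2)) * c)
        else 0 := by
  classical
  set u' : ZMod p := (u : ZMod p)
  set A := u' * lam 0 0 ^ 2 + lam 0 1 ^ 2
  set B := 2 * (u' * lam 0 0 * lam 1 0 + lam 0 1 * lam 1 1)
  set C := u' * lam 1 0 ^ 2 + lam 1 1 ^ 2
  set F : (Fin 2 → Fin 2 → ZMod p) → ℂ := fun x =>
    if (Matrix.of x).IsSymm ∧ (Matrix.of x).rank = 2 then
      Complex.exp (2 * Real.pi * Complex.I *
        ((((Matrix.diagonal ![u', 1] * lamᵀ * Matrix.of x * lam).trace).val : ℕ) : ℂ)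
          / (p : ℂ))
    else 0 with hF
  have step1 : rankTwoGaussSum p u lam = ∑ x : Fin 2 → Fin 2 → ZMod p, F x := rfl
  set g : ((ZMod p × ZMod p) × (ZMod p × ZMod p)) → (Fin 2 → Fin 2 → ZMod p) :=
    fun q => ![![q.1.1, q.1.2], ![q.2.1, q.2.2]] with hg
  have hbij : Function.Bijective g := by
    constructor
    · intro q r h
      have h00 := congrFun (congrFun h 0) 0
      have h01 := congrFun (congrFun h 0) 1
      have h10 := congrFun (congrFun h 1) 0
      have h11 := congrFun (congrFun h 1) 1
      simp [hg] at h00 h01 h10 h11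
      exact Prod.ext (Prod.ext h00 h01) (Prod.ext h10 h11)
    · intro x
      refine ⟨((x 0 0, x 0 1), (x 1 0, x 1 1)), ?_⟩
      funext i j
      fin_cases i <;> fin_cases j <;> rfl
  have step2 : (∑ x : Fin 2 → Fin 2 → ZMod p, F x)
      = ∑ q : (ZMod p × ZMod p) × (ZMod p × ZMod p), F (g q) :=
    (Fintype.sum_bijective g hbij _ _ fun q => rfl).symm
  rw [step1, step2]
  rw [Fintype.sum_prod_type]
  simp_rw [Fintype.sum_prod_type]
  have key : ∀ a b b' c : ZMod p,
      F ![![a, b], ![b', c]]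
      = if b' = b then
          (if a * c - b * b ≠ 0 then ZMod.stdAddChar (A * a + B * b + C * c) else 0)
        else 0 := by
    intro a b b' c
    by_cases hb : b' = b
    · subst hb
      rw [if_pos rfl]
      have hsymm : (Matrix.of ![![a, b'], ![b', c]]).IsSymm := by
        ext i j
        fin_cases i <;> fin_cases j <;> rfl
      have hrank : (Matrix.of ![![a, b'], ![b', c]]).rank = 2 ↔ a * c - b' * b' ≠ 0 := by
        rw [rank_two_iff, Matrix.det_fin_two_of]
      have htr : (Matrix.diagonal ![u', 1] * lamᵀ * Matrix.of ![![a, b'], ![b', c]] * lam).trace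
          = A * a + B * b' + C * c := by
        simp only [A, B, C]
        simp [Matrix.trace_fin_two, Matrix.mul_apply, Fin.sum_univ_two, Matrix.diagonal_apply]
        ring
      by_cases hd : a * c - b' * b' ≠ 0
      · rw [if_pos hd, hF]
        simp only
        rw [if_pos ⟨hsymm, hrank.mpr hd⟩, htr]
        rw [ZMod.stdAddChar_apply, ZMod.toCircle_apply]
      · rw [if_neg hd, hF]
        simp only
        rw [if_neg]
        rintro ⟨-, h2⟩
        exact hd (hrank.mp h2)
    · rw [if_neg hb, hF]
      simp only
      rw [if_neg]
      rintro ⟨h1, -⟩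
      have := congrFun (congrFun h1 0) 1
      simp at this
      exact hb this
  simp only [hg, key]
  refine Finset.sum_congr rfl fun a _ => ?_
  refine Finset.sum_congr rfl fun b _ => ?_
  rw [Finset.sum_comm]
  simp

end Statement9Aux

/-- Values of the rank-two Gauss sum `G₂(λ)` for `M = diag(u,1)`,
`p` an odd prime, `p ∤ u`. -/
theorem statement_9 (p : ℕ) [Fact p.Prime] (hodd : p ≠ 2)
    (u : ℤ) (hu : ¬ (p : ℤ) ∣ u)
    (lam : Matrix (Fin 2) (Fin 2) (ZMod p)) :
    (lam = 0 → rankTwoGaussSum p u lam = (p : ℂ) ^ 2 * ((p : ℂ) - 1)) ∧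
    (lam.rank = 2 →
      rankTwoGaussSum p u lam = -(((legendreSym p (-u) : ℤ) : ℂ) * (p : ℂ))) ∧
    (lam.rank = 1 → ∀ t : ZMod p, (∀ i, lam i 1 = t * lam i 0) →
      (u : ZMod p) + t ^ 2 = 0 →
      rankTwoGaussSum p u lam = (p : ℂ) ^ 2 * ((p : ℂ) - 1)) ∧
    (lam.rank = 1 →
      ((∃ t : ZMod p, (∀ i, lam i 1 = t * lam i 0) ∧ (u : ZMod p) + t ^ 2 ≠ 0)
        ∨ (∀ i, lam i 0 = 0)) →
      rankTwoGaussSum p u lam = 0) := by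
  classical
  open Statement9Aux in
  have hu' : (u : ZMod p) ≠ 0 := fun h => hu ((ZMod.intCast_zmod_eq_zero_iff_dvd u p).mp h)
  have h2 : (2 : ZMod p) ≠ 0 := Statement9Aux.zmodTwoNeZero hodd
  refine ⟨?_, ?_, ?_, ?_⟩
  · -- λ = 0
    intro h
    subst h
    rw [Statement9Aux.gauss_eq, Statement9Aux.master hodd]
    norm_num
  · -- rank λ = 2
    intro hrank
    have hdet : lam.det ≠ 0 := (Statement9Aux.rank_two_iff lam).mp hrank
    have hd : lam 0 0 * lam 1 1 - lam 0 1 * lam 1 0 ≠ 0 := by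
      rwa [Matrix.det_fin_two] at hdet
    rw [Statement9Aux.gauss_eq, Statement9Aux.master hodd]
    have hD : (2 * ((u : ZMod p) * lam 0 0 * lam 1 0 + lam 0 1 * lam 1 1)) ^ 2
        - 4 * ((u : ZMod p) * lam 0 0 ^ 2 + lam 0 1 ^ 2) * ((u : ZMod p) * lam 1 0 ^ 2 + lam 1 1 ^ 2)
        = (-(u : ZMod p)) * (2 * (lam 0 0 * lam 1 1 - lam 0 1 * lam 1 0)) ^ 2 := by
      ring
    rw [if_neg, hD,
      _root_.map_mul (quadraticChar (ZMod p)) (-(u : ZMod p)) ((2 * (lam 0 0 * lam 1 1 - lam 0 1 * lam 1 0)) ^ 2),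
      quadraticChar_sq_one' (mul_ne_zero h2 hd)]
    · have hleg : legendreSym p (-u) = quadraticChar (ZMod p) (-(u : ZMod p)) := by
        rw [legendreSym]
        norm_cast
      rw [hleg]
      push_cast
      ring
    · rintro ⟨ha, hb, hc⟩
      rw [ha, hb, hc] at hD
      have : (-(u : ZMod p)) * (2 * (lam 0 0 * lam 1 1 - lam 0 1 * lam 1 0)) ^ 2 ≠ 0 :=
        mul_ne_zero (neg_ne_zero.mpr hu') (pow_ne_zero 2 (mul_ne_zero h2 hd))
      exact this (by linear_combination -hD)
  · -- rank 1, u + t² = 0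
    intro hrank t ht h0
    rw [Statement9Aux.gauss_eq, Statement9Aux.master hodd, if_pos]
    refine ⟨?_, ?_, ?_⟩
    · rw [ht 0]; linear_combination lam 0 0 ^ 2 * h0
    · rw [ht 0, ht 1]; linear_combination 2 * lam 0 0 * lam 1 0 * h0
    · rw [ht 1]; linear_combination lam 1 0 ^ 2 * h0
  · -- rank 1, vanishing case
    intro hrank hcase
    have hlam_ne : lam ≠ 0 := by
      intro h
      rw [h, Matrix.rank_zero] at hrank
      norm_num at hrank
    rw [Statement9Aux.gauss_eq, Statement9Aux.master hodd]
    rcases hcase with ⟨t, ht, hne⟩ | hz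
    · have hD : (2 * ((u : ZMod p) * lam 0 0 * lam 1 0 + lam 0 1 * lam 1 1)) ^ 2
          - 4 * ((u : ZMod p) * lam 0 0 ^ 2 + lam 0 1 ^ 2) * ((u : ZMod p) * lam 1 0 ^ 2 + lam 1 1 ^ 2)
          = 0 := by
        rw [ht 0, ht 1]
        ring
      rw [if_neg, hD]
      · simp [quadraticChar_zero]
      · rintro ⟨ha, hb, hc⟩
        rw [ht 0] at ha
        rw [ht 1] at hc
        have ha' : ((u : ZMod p) + t ^ 2) * lam 0 0 ^ 2 = 0 := by linear_combination ha
        have hc' : ((u : ZMod p) + t ^ 2) * lam 1 0 ^ 2 = 0 := by linear_combination hc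
        have h00 : lam 0 0 = 0 := by
          have h : lam 0 0 ^ 2 = 0 := (mul_eq_zero.mp ha').resolve_left hne
          exact pow_eq_zero_iff (by norm_num : (2:ℕ) ≠ 0) |>.mp h
        have h10 : lam 1 0 = 0 := by
          have h : lam 1 0 ^ 2 = 0 := (mul_eq_zero.mp hc').resolve_left hne
          exact pow_eq_zero_iff (by norm_num : (2:ℕ) ≠ 0) |>.mp h
        apply hlam_ne
        ext i j
        fin_cases i <;> fin_cases j <;> simp [ht 0, ht 1, h00, h10]
    · have hD : (2 * ((u : ZMod p) * lam 0 0 * lam 1 0 + lam 0 1 * lam 1 1)) ^ 2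
          - 4 * ((u : ZMod p) * lam 0 0 ^ 2 + lam 0 1 ^ 2) * ((u : ZMod p) * lam 1 0 ^ 2 + lam 1 1 ^ 2)
          = 0 := by
        rw [hz 0, hz 1]
        ring
      rw [if_neg, hD]
      · simp [quadraticChar_zero]
      · rintro ⟨ha, hb, hc⟩
        rw [hz 0] at ha
        rw [hz 1] at hc
        have h01 : lam 0 1 = 0 := by
          have : lam 0 1 ^ 2 = 0 := by linear_combination ha
          exact pow_eq_zero_iff (by norm_num : (2:ℕ) ≠ 0) |>.mp this
        have h11 : lam 1 1 = 0 := by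
          have : lam 1 1 ^ 2 = 0 := by linear_combination hc
          exact pow_eq_zero_iff (by norm_num : (2:ℕ) ≠ 0) |>.mp this
        apply hlam_ne
        ext i j
        fin_cases i <;> fin_cases j <;> simp [hz 0, hz 1, h01, h11]
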